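/- If 0 ≤ x < ln 2, then for every n ≥ 0 the exponential recurrence satisfies 1 ≤ Eₙ < 2 (so each Eₙ is a valid binary floating-point significand). -/

import Mathlib

/-- Restoring shift-and-add recurrence for computing `exp x`:
`(expRec x n).1 = Lₙ` (residual) and `(expRec x n).2 = Eₙ` (partial product),
with `L₀ = x`, `E₀ = 1`, `dₙ = 1` iff `Lₙ ≥ ln (1 + 2⁻ⁿ)`,
`Lₙ₊₁ = Lₙ - ln (1 + dₙ 2⁻ⁿ)`, `Eₙ₊₁ = Eₙ (1 + dₙ 2⁻ⁿ)`. -/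
noncomputable def expRec (x : ℝ) : ℕ → ℝ × ℝ
  | 0 => (x, 1)
  | n + 1 =>
    let p := expRec x n
    if Real.log (1 + (2 : ℝ) ^ (-(n : ℤ))) ≤ p.1 then
      (p.1 - Real.log (1 + (2 : ℝ) ^ (-(n : ℤ))), p.2 * (1 + (2 : ℝ) ^ (-(n : ℤ))))
    else p

lemma expRec_invariant (x : ℝ) (hx0 : 0 ≤ x) (n : ℕ) :
    0 ≤ (expRec x n).1 ∧ (expRec x n).2 * Real.exp (expRec x n).1 = Real.exp x ∧
      1 ≤ (expRec x n).2 := by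
  induction n with
  | zero => simp [expRec, hx0]
  | succ n ih =>
    obtain ⟨hL, hE, hE1⟩ := ih
    have hpos : (0 : ℝ) < 1 + (2 : ℝ) ^ (-(n : ℤ)) := by positivity
    simp only [expRec]
    split_ifs with h
    · dsimp only
      refine ⟨by linarith, ?_, ?_⟩
      · rw [Real.exp_sub, Real.exp_log hpos]
        field_simp
        linear_combination hE
      · nlinarith [(show (0:ℝ) < (2:ℝ) ^ (-(n : ℤ)) by positivity)]
    · exact ⟨hL, hE, hE1⟩

/-- If `0 ≤ x < ln 2`, then for every `n`, `1 ≤ Eₙ < 2`. -/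
theorem expRec_significand_bounds (x : ℝ) (hx0 : 0 ≤ x) (hx2 : x < Real.log 2) (n : ℕ) :
    1 ≤ (expRec x n).2 ∧ (expRec x n).2 < 2 := by
  obtain ⟨hL, hE, hE1⟩ := expRec_invariant x hx0 n
  refine ⟨hE1, ?_⟩
  have h1 : Real.exp x < 2 := by
    calc Real.exp x < Real.exp (Real.log 2) := Real.exp_lt_exp.mpr hx2
    _ = 2 := Real.exp_log (by norm_num)
  have h2 : (expRec x n).2 ≤ (expRec x n).2 * Real.exp (expRec x n).1 := by
    nlinarith [Real.one_le_exp hL]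
  linarith
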